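/- Per-iteration descent of GD with adaptive warm-up step size: let f be (H0, H1)-smooth and define the iterate w_{k+1} = w_k − η_k ∇f(w_k) with η_k = 1/(10H0 + 20H1(f(w_k) − f*)). Then f(w_{k+1}) ≤ f(w_k) − (η_k/2)‖∇f(w_k)‖². In particular the function values are monotonically decreasing and the step sizes η_k are nondecreasing in k. -/

import Mathlib

open Set Filter Topology RealInnerProductSpace

/-- 1D continuous-induction descent lemma. -/
lemma descent1D (ψ ψ' ψ'' : ℝ → ℝ)
    (hd1 : ∀ t, HasDerivAt ψ (ψ' t) t)
    (hd2 : ∀ t, HasDerivAt ψ' (ψ'' t) t)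
    (b c : ℝ) (hb : 0 < b) (hc : 0 ≤ c) (hcb : c ≤ b / 2)
    (hψ'0 : ψ' 0 = -b)
    (h2 : ∀ t ∈ Set.Icc (0:ℝ) 1, ψ t ≤ ψ 0 → ψ'' t ≤ c) :
    ψ 1 ≤ ψ 0 - b + c / 2 := by
  have hψ'diff : Differentiable ℝ ψ' := fun t => (hd2 t).differentiableAt
  have hψdiff : Differentiable ℝ ψ := fun t => (hd1 t).differentiableAt
  set S : Set ℝ := {s | s ∈ Set.Icc (0:ℝ) 1 ∧ ∀ t ∈ Set.Icc (0:ℝ) s, ψ t ≤ ψ 0} with hS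
  have h0S : (0:ℝ) ∈ S := by
    refine ⟨⟨le_rfl, zero_le_one⟩, fun t ht => ?_⟩
    have : t = 0 := le_antisymm ht.2 ht.1
    simp [this]
  have hbdd : BddAbove S := ⟨1, fun s hs => hs.1.2⟩
  set T := sSup S with hT
  have hT0 : 0 ≤ T := le_csSup hbdd h0S
  have hT1 : T ≤ 1 := csSup_le ⟨0, h0S⟩ fun s hs => hs.1.2
  -- ψ ≤ ψ 0 on [0, T]
  have hlt : ∀ t, 0 ≤ t → t < T → ψ t ≤ ψ 0 := by
    intro t ht0 htT
    obtain ⟨s, hsS, hts⟩ := exists_lt_of_lt_csSup ⟨0, h0S⟩ htT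
    exact hsS.2 t ⟨ht0, hts.le⟩
  have bound_on : ∀ t ∈ Set.Icc (0:ℝ) T, ψ t ≤ ψ 0 := by
    intro t ht
    rcases lt_or_eq_of_le ht.2 with h | h
    · exact hlt t ht.1 h
    · rw [h]
      rcases eq_or_lt_of_le hT0 with h0 | h0
      · rw [← h0]
      · have htend : Tendsto ψ (𝓝[<] T) (𝓝 (ψ T)) :=
          (hd1 T).continuousAt.continuousWithinAt
        refine le_of_tendsto htend ?_
        filter_upwards [Ioo_mem_nhdsLT h0] with s hs
        exact hlt s hs.1.le hs.2
  -- ψ' t ≤ -b + c * t on [0, T]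
  have derivbd : ∀ t ∈ Set.Icc (0:ℝ) T, ψ' t ≤ -b + c * t := by
    have hanti : AntitoneOn (fun t => ψ' t - c * t) (Set.Icc 0 T) := by
      apply antitoneOn_of_deriv_nonpos (convex_Icc 0 T)
      · exact (hψ'diff.continuous.sub (continuous_const.mul continuous_id)).continuousOn
      · exact (hψ'diff.sub ((differentiable_id.const_mul c))).differentiableOn
      · intro x hx
        rw [interior_Icc] at hx
        have hder : HasDerivAt (fun t => ψ' t - c * t) (ψ'' x - c * 1) x :=
          (hd2 x).sub ((hasDerivAt_id x).const_mul c)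
        rw [hder.deriv]
        have hx1 : x ∈ Set.Icc (0:ℝ) 1 := ⟨hx.1.le, hx.2.le.trans hT1⟩
        have := h2 x hx1 (bound_on x ⟨hx.1.le, hx.2.le⟩)
        linarith
    intro t ht
    have := hanti (left_mem_Icc.2 hT0) ht ht.1
    simp only [mul_zero, sub_zero, hψ'0] at this
    linarith
  -- ψ t ≤ ψ 0 - b t + c t²/2 on [0, T]
  have funbd : ∀ t ∈ Set.Icc (0:ℝ) T, ψ t ≤ ψ 0 - b * t + c * t ^ 2 / 2 := by
    have hanti : AntitoneOn (fun t => ψ t + b * t - c / 2 * t ^ 2) (Set.Icc 0 T) := by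
      apply antitoneOn_of_deriv_nonpos (convex_Icc 0 T)
      · have hψc : Continuous ψ := hψdiff.continuous
        exact ((hψc.add (continuous_const.mul continuous_id)).sub
          (continuous_const.mul (continuous_pow 2))).continuousOn
      · exact ((hψdiff.add
          (differentiable_id.const_mul b)).sub
          ((differentiable_pow 2).const_mul (c / 2))).differentiableOn
      · intro x hx
        rw [interior_Icc] at hx
        have hder : HasDerivAt (fun t => ψ t + b * t - c / 2 * t ^ 2)
            (ψ' x + b * 1 - c / 2 * (↑2 * x ^ 1)) x :=
          ((hd1 x).add ((hasDerivAt_id x).const_mul b)).sub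
            ((hasDerivAt_pow 2 x).const_mul (c / 2))
        rw [hder.deriv]
        have := derivbd x ⟨hx.1.le, hx.2.le⟩

        nlinarith
    intro t ht
    have := hanti (left_mem_Icc.2 hT0) ht ht.1
    simp only [mul_zero, add_zero, zero_pow, sub_zero] at this
    nlinarith [this]
  -- T = 1
  have hTeq : T = 1 := by
    by_contra hne
    have hTlt : T < 1 := lt_of_le_of_ne hT1 hne
    have hψ'T : ψ' T < 0 := by
      have := derivbd T ⟨hT0, le_rfl⟩
      nlinarith
    -- slope is eventually negative to the right of T
    have hslope : ∀ᶠ s in 𝓝[>] T, slope ψ T s < 0 := by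
      have htends : Tendsto (slope ψ T) (𝓝[≠] T) (𝓝 (ψ' T)) :=
        hasDerivAt_iff_tendsto_slope.mp (hd1 T)
      have hmono : 𝓝[>] T ≤ 𝓝[≠] T :=
        nhdsWithin_mono T fun x hx => ne_of_gt hx
      exact (htends.mono_left hmono).eventually_lt_const hψ'T
    obtain ⟨u, hu, hsub⟩ := mem_nhdsGT_iff_exists_Ioc_subset.mp hslope
    set s := min u 1 with hs
    have hTs : T < s := lt_min hu hTlt
    have hsS : s ∈ S := by
      refine ⟨⟨hT0.trans hTs.le, min_le_right _ _⟩, fun t ht => ?_⟩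
      rcases le_or_gt t T with h | h
      · exact bound_on t ⟨ht.1, h⟩
      · have hts : t ∈ Set.Ioc T u := ⟨h, ht.2.trans (min_le_left _ _)⟩
        have hsl : slope ψ T t < 0 := hsub hts
        rw [slope_def_field] at hsl
        have hpos : 0 < t - T := sub_pos.2 h
        have : ψ t - ψ T < 0 := by
          rw [div_neg_iff] at hsl
          rcases hsl with ⟨h1, h2⟩ | ⟨h1, h2⟩
          · linarith
          · linarith
        have := bound_on T ⟨hT0, le_rfl⟩
        linarith
    exact absurd (le_csSup hbdd hsS) (not_le.2 hTs)
  have := funbd 1 (by rw [hTeq]; exact ⟨zero_le_one, le_rfl⟩)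
  nlinarith

set_option maxHeartbeats 1000000 in
/-- Per-iteration descent of GD with the adaptive warm-up step size. -/
theorem stmt_9 {d : ℕ} (f : EuclideanSpace ℝ (Fin d) → ℝ)
    (H0 H1 fstar : ℝ) (hH0 : 0 < H0) (hH1 : 0 < H1)
    (hf : ContDiff ℝ 2 f) (hfstar : IsGLB (Set.range f) fstar)
    (hs : ∀ z, ‖iteratedFDeriv ℝ 2 f z‖ ≤ H0 + H1 * (f z - fstar))
    (w : ℕ → EuclideanSpace ℝ (Fin d)) (η : ℕ → ℝ)
    (hη : ∀ k, η k = 1 / (10 * H0 + 20 * H1 * (f (w k) - fstar)))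
    (hstep : ∀ k, w (k + 1) = w k - η k • gradient f (w k)) :
    (∀ k, f (w (k + 1)) ≤ f (w k) - (η k / 2) * ‖gradient f (w k)‖ ^ 2) ∧
    (∀ k, f (w (k + 1)) ≤ f (w k)) ∧
    (∀ k, η k ≤ η (k + 1)) := by
  have hlb : ∀ z, fstar ≤ f z := fun z => hfstar.1 ⟨z, rfl⟩
  have hdiff : Differentiable ℝ f := hf.differentiable two_ne_zero
  have hDf : Differentiable ℝ (fderiv ℝ f) :=
    (hf.fderiv_right (m := 1) (by norm_num)).differentiable one_ne_zero
  have hgradf : ∀ z (u : EuclideanSpace ℝ (Fin d)),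
      fderiv ℝ f z u = inner (𝕜 := ℝ) (gradient f z) u := by
    intro z u
    have h : (InnerProductSpace.toDual ℝ _) (gradient f z) = fderiv ℝ f z := by
      simp [gradient]
    rw [← h, InnerProductSpace.toDual_apply_apply]
  have hDpos : ∀ k, 0 < 10 * H0 + 20 * H1 * (f (w k) - fstar) := by
    intro k
    have := hlb (w k)
    nlinarith
  have hηpos : ∀ k, 0 < η k := by
    intro k
    rw [hη k]
    exact one_div_pos.2 (hDpos k)
  have key : ∀ k, f (w (k + 1)) ≤ f (w k) - (η k / 2) * ‖gradient f (w k)‖ ^ 2 := by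
    intro k
    set g := gradient f (w k) with hg
    by_cases hg0 : g = 0
    · rw [hstep k, ← hg, hg0]
      simp
    · set v : EuclideanSpace ℝ (Fin d) := -(η k • g) with hv
      set x : ℝ → EuclideanSpace ℝ (Fin d) := fun t => w k + t • v with hx
      have hx0 : x 0 = w k := by simp [hx]
      have hxd : ∀ t : ℝ, HasDerivAt x v t := by
        intro t
        simpa [hx] using ((hasDerivAt_id t).smul_const v).const_add (w k)
      set ψ : ℝ → ℝ := fun t => f (x t) with hψ
      set ψ' : ℝ → ℝ := fun t => fderiv ℝ f (x t) v with hψ'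
      set ψ'' : ℝ → ℝ := fun t => fderiv ℝ (fderiv ℝ f) (x t) v v with hψ''
      have hd1 : ∀ t, HasDerivAt ψ (ψ' t) t := fun t =>
        (hdiff (x t)).hasFDerivAt.comp_hasDerivAt t (hxd t)
      have hd2 : ∀ t, HasDerivAt ψ' (ψ'' t) t := by
        intro t
        have h1 : HasDerivAt (fun s => fderiv ℝ f (x s)) (fderiv ℝ (fderiv ℝ f) (x t) v) t :=
          (hDf (x t)).hasFDerivAt.comp_hasDerivAt t (hxd t)
        have h2 := h1.clm_apply (hasDerivAt_const t v)
        simpa using h2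
      have hF0 : 0 ≤ f (w k) - fstar := sub_nonneg.2 (hlb _)
      have hnv : ‖v‖ = η k * ‖g‖ := by
        rw [hv, norm_neg, norm_smul, Real.norm_eq_abs, abs_of_pos (hηpos k)]
      set b : ℝ := η k * ‖g‖ ^ 2 with hb
      set c : ℝ := (H0 + H1 * (f (w k) - fstar)) * (η k * ‖g‖) ^ 2 with hc
      have hgpos : 0 < ‖g‖ := norm_pos_iff.2 hg0
      have hbpos : 0 < b := by rw [hb]; exact mul_pos (hηpos k) (pow_pos hgpos 2)
      have hLpos : 0 < H0 + H1 * (f (w k) - fstar) := by nlinarith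
      have hcnn : 0 ≤ c := by positivity
      have hLη : (H0 + H1 * (f (w k) - fstar)) * η k ≤ 1 / 2 := by
        rw [hη k]
        rw [mul_one_div, div_le_iff₀ (hDpos k)]
        nlinarith
      have hcb : c ≤ b / 2 := by
        have h := mul_le_mul_of_nonneg_right hLη
          (mul_nonneg (hηpos k).le (sq_nonneg ‖g‖))
        rw [hc, hb]
        nlinarith [h]
      have hψ'0 : ψ' 0 = -b := by
        rw [hψ']
        simp only [hx0]
        rw [hgradf (w k) v, hv, inner_neg_right, real_inner_smul_right,
          real_inner_self_eq_norm_sq, hb]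
      have h2 : ∀ t ∈ Set.Icc (0:ℝ) 1, ψ t ≤ ψ 0 → ψ'' t ≤ c := by
        intro t _ hle
        have hψ0 : ψ 0 = f (w k) := by rw [hψ]; simp [hx0]
        have heq : ψ'' t = iteratedFDeriv ℝ 2 f (x t) ![v, v] := by
          rw [iteratedFDeriv_two_apply]
          simp [hψ'']
        have hop : ψ'' t ≤ ‖iteratedFDeriv ℝ 2 f (x t)‖ * (‖v‖ * ‖v‖) := by
          rw [heq]
          calc iteratedFDeriv ℝ 2 f (x t) ![v, v]
              ≤ ‖iteratedFDeriv ℝ 2 f (x t) ![v, v]‖ := le_abs_self _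
            _ ≤ ‖iteratedFDeriv ℝ 2 f (x t)‖ * ∏ i, ‖(![v, v]) i‖ :=
                (iteratedFDeriv ℝ 2 f (x t)).le_opNorm _
            _ = ‖iteratedFDeriv ℝ 2 f (x t)‖ * (‖v‖ * ‖v‖) := by
                rw [Fin.prod_univ_two]
                simp
        have hH : ‖iteratedFDeriv ℝ 2 f (x t)‖ ≤ H0 + H1 * (f (w k) - fstar) := by
          refine (hs (x t)).trans ?_
          have : f (x t) ≤ f (w k) := by rw [← hψ0]; exact hle
          nlinarith
        calc ψ'' t ≤ ‖iteratedFDeriv ℝ 2 f (x t)‖ * (‖v‖ * ‖v‖) := hop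
          _ ≤ (H0 + H1 * (f (w k) - fstar)) * (‖v‖ * ‖v‖) :=
              mul_le_mul_of_nonneg_right hH (by positivity)
          _ = c := by rw [hc, hnv]; ring
      have hmain := descent1D ψ ψ' ψ'' hd1 hd2 b c hbpos hcnn hcb hψ'0 h2
      have hψ1 : ψ 1 = f (w (k + 1)) := by
        rw [hψ, hstep k]

        rw [hx, hv]
        simp [sub_eq_add_neg, hg]
      have hψ0 : ψ 0 = f (w k) := by rw [hψ]; simp [hx0]
      rw [← hψ1]
      rw [hψ0] at hmain
      nlinarith [hmain]
  refine ⟨key, fun k => ?_, fun k => ?_⟩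
  · have := key k
    nlinarith [mul_nonneg (hηpos k).le (sq_nonneg ‖gradient f (w k)‖)]
  · have hdec : f (w (k + 1)) ≤ f (w k) := by
      have := key k
      nlinarith [mul_nonneg (hηpos k).le (sq_nonneg ‖gradient f (w k)‖)]
    rw [hη k, hη (k + 1)]
    apply one_div_le_one_div_of_le (hDpos (k + 1))
    nlinarith
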